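/- Let r,s,t,u be integers with ru−st=1 and s even. Then there exists an automorphism θ of G(r,s,t,u) fixing the generators a and b (so θ(c) = w·c for some w in the subgroup generated by a² and b whose total exponent of b is odd) such that φ₆ ∘ θ = φ₂, where φ₂, φ₆ : G(r,s,t,u) → ℤ/2ℤ are the homomorphisms determined on the generators (a,b,c) by (0,1,0) and (0,1,1) respectively. -/

import Mathlib

/-- The relators of the presentation of the fundamental group of the sapphire
Sol 3-manifold determined by the matrix `[[r, s], [t, u]]`:
`a·b·a⁻¹·b`, `c²·a^(−2r)·b^(−s)` and `c·a^(2t)·b^u·c⁻¹·a^(2t)·b^u`,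
where `a, b, c` are the generators `of 0, of 1, of 2`. -/
def sapphireRels (r s t u : ℤ) : Set (FreeGroup (Fin 3)) :=
  { FreeGroup.of 0 * FreeGroup.of 1 * (FreeGroup.of 0)⁻¹ * FreeGroup.of 1,
    FreeGroup.of 2 ^ (2 : ℤ) * FreeGroup.of 0 ^ (-(2 * r)) * FreeGroup.of 1 ^ (-s),
    FreeGroup.of 2 * FreeGroup.of 0 ^ (2 * t) * FreeGroup.of 1 ^ u * (FreeGroup.of 2)⁻¹ *
      FreeGroup.of 0 ^ (2 * t) * FreeGroup.of 1 ^ u }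

/-- The fundamental group `G(r,s,t,u)` of the sapphire Sol 3-manifold. -/
abbrev SapphireGroup (r s t u : ℤ) := PresentedGroup (sapphireRels r s t u)

section Aux

variable (r s t u : ℤ)

local notation "aa" => (PresentedGroup.of 0 : SapphireGroup r s t u)
local notation "bb" => (PresentedGroup.of 1 : SapphireGroup r s t u)
local notation "cc" => (PresentedGroup.of 2 : SapphireGroup r s t u)

lemma sapphire_mk_rel {x : FreeGroup (Fin 3)} (hx : x ∈ sapphireRels r s t u) :
    PresentedGroup.mk (sapphireRels r s t u) x = 1 :=
  (QuotientGroup.eq_one_iff x).mpr (Subgroup.subset_normalClosure hx)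

lemma sapphire_rel1 : aa * bb * aa⁻¹ * bb = 1 := by
  have := sapphire_mk_rel r s t u (x := FreeGroup.of 0 * FreeGroup.of 1 *
      (FreeGroup.of 0)⁻¹ * FreeGroup.of 1) (by simp [sapphireRels])
  simpa [map_mul, map_inv, PresentedGroup.of] using this

lemma sapphire_rel2 : cc * cc * aa ^ (-(2 * r)) * bb ^ (-s) = 1 := by
  have := sapphire_mk_rel r s t u (x := FreeGroup.of 2 ^ (2 : ℤ) *
      FreeGroup.of 0 ^ (-(2 * r)) * FreeGroup.of 1 ^ (-s))
    (by simp [sapphireRels])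
  rw [zpow_two] at this
  simpa [map_mul, map_zpow, PresentedGroup.of] using this

lemma sapphire_rel3 :
    cc * aa ^ (2 * t) * bb ^ u * cc⁻¹ * aa ^ (2 * t) * bb ^ u = 1 := by
  have := sapphire_mk_rel r s t u (x := FreeGroup.of 2 * FreeGroup.of 0 ^ (2 * t) *
      FreeGroup.of 1 ^ u * (FreeGroup.of 2)⁻¹ * FreeGroup.of 0 ^ (2 * t) * FreeGroup.of 1 ^ u)
    (by simp [sapphireRels])
  simpa [map_mul, map_zpow, map_inv, PresentedGroup.of] using this

lemma sapphire_conj :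
    cc * (aa ^ (2 * t) * bb ^ u) = (bb ^ u)⁻¹ * (aa ^ (2 * t))⁻¹ * cc := by
  have h9 : ((bb ^ u)⁻¹ * (aa ^ (2 * t))⁻¹ * cc)⁻¹ * (cc * (aa ^ (2 * t) * bb ^ u)) = 1 := by
    have hre : ((bb ^ u)⁻¹ * (aa ^ (2 * t))⁻¹ * cc)⁻¹ * (cc * (aa ^ (2 * t) * bb ^ u)) =
        (cc⁻¹ * (aa ^ (2 * t) * bb ^ u)) *
          (cc * aa ^ (2 * t) * bb ^ u * cc⁻¹ * aa ^ (2 * t) * bb ^ u) *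
          (cc⁻¹ * (aa ^ (2 * t) * bb ^ u))⁻¹ := by
      group
    rw [hre, sapphire_rel3, mul_one, mul_inv_cancel]
  exact (inv_mul_eq_one.mp h9).symm

/-- the map defining θ -/
def sapphireF : Fin 3 → SapphireGroup r s t u :=
  ![aa, bb, aa ^ (2 * t) * bb ^ u * cc]

/-- the map defining θ⁻¹ -/
def sapphireFinv : Fin 3 → SapphireGroup r s t u :=
  ![aa, bb, (bb ^ u)⁻¹ * (aa ^ (2 * t))⁻¹ * cc]

lemma sapphireF_rels : ∀ x ∈ sapphireRels r s t u,
    FreeGroup.lift (sapphireF r s t u) x = 1 := by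
  have e0 : sapphireF r s t u 0 = aa := rfl
  have e1 : sapphireF r s t u 1 = bb := rfl
  have e2 : sapphireF r s t u 2 = aa ^ (2 * t) * bb ^ u * cc := rfl
  intro x hx
  simp only [sapphireRels, Set.mem_insert_iff, Set.mem_singleton_iff] at hx
  rcases hx with rfl | rfl | rfl
  · simp only [map_mul, map_inv, FreeGroup.lift_apply_of, e0, e1]
    exact sapphire_rel1 r s t u
  · simp only [map_mul, map_zpow, FreeGroup.lift_apply_of, e0, e1, e2]
    rw [zpow_two]
    have key : (aa ^ (2 * t) * bb ^ u * cc) * (aa ^ (2 * t) * bb ^ u * cc) = cc * cc := by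
      rw [show (aa ^ (2 * t) * bb ^ u * cc) * (aa ^ (2 * t) * bb ^ u * cc) =
          aa ^ (2 * t) * bb ^ u * (cc * (aa ^ (2 * t) * bb ^ u)) * cc from by group,
        sapphire_conj]
      group
    rw [key]
    exact sapphire_rel2 r s t u
  · simp only [map_mul, map_zpow, map_inv, FreeGroup.lift_apply_of, e0, e1, e2]
    rw [show aa ^ (2 * t) * bb ^ u * cc * aa ^ (2 * t) * bb ^ u *
        (aa ^ (2 * t) * bb ^ u * cc)⁻¹ * aa ^ (2 * t) * bb ^ u =
        aa ^ (2 * t) * bb ^ u * (cc * (aa ^ (2 * t) * bb ^ u)) * cc⁻¹ *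
          (bb ^ u)⁻¹ * (aa ^ (2 * t))⁻¹ * (aa ^ (2 * t) * bb ^ u) from by group,
      sapphire_conj]
    group

lemma sapphireFinv_rels : ∀ x ∈ sapphireRels r s t u,
    FreeGroup.lift (sapphireFinv r s t u) x = 1 := by
  have e0 : sapphireFinv r s t u 0 = aa := rfl
  have e1 : sapphireFinv r s t u 1 = bb := rfl
  have e2 : sapphireFinv r s t u 2 = (bb ^ u)⁻¹ * (aa ^ (2 * t))⁻¹ * cc := rfl
  have hconj : cc * (aa ^ (2 * t) * bb ^ u) * cc⁻¹ = (bb ^ u)⁻¹ * (aa ^ (2 * t))⁻¹ := by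
    rw [sapphire_conj]; group
  have hconjinv : cc * ((bb ^ u)⁻¹ * (aa ^ (2 * t))⁻¹) * cc⁻¹ =
      aa ^ (2 * t) * bb ^ u := by
    rw [show cc * ((bb ^ u)⁻¹ * (aa ^ (2 * t))⁻¹) * cc⁻¹ =
        (cc * (aa ^ (2 * t) * bb ^ u) * cc⁻¹)⁻¹ from by group, hconj]
    group
  intro x hx
  simp only [sapphireRels, Set.mem_insert_iff, Set.mem_singleton_iff] at hx
  rcases hx with rfl | rfl | rfl
  · simp only [map_mul, map_inv, FreeGroup.lift_apply_of, e0, e1]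
    exact sapphire_rel1 r s t u
  · simp only [map_mul, map_zpow, FreeGroup.lift_apply_of, e0, e1, e2]
    rw [zpow_two]
    have key : ((bb ^ u)⁻¹ * (aa ^ (2 * t))⁻¹ * cc) * ((bb ^ u)⁻¹ * (aa ^ (2 * t))⁻¹ * cc) =
        cc * cc := by
      rw [show ((bb ^ u)⁻¹ * (aa ^ (2 * t))⁻¹ * cc) * ((bb ^ u)⁻¹ * (aa ^ (2 * t))⁻¹ * cc) =
          (bb ^ u)⁻¹ * (aa ^ (2 * t))⁻¹ *
            (cc * ((bb ^ u)⁻¹ * (aa ^ (2 * t))⁻¹) * cc⁻¹) * (cc * cc) from by group,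
        hconjinv]
      group
    rw [key]
    exact sapphire_rel2 r s t u
  · simp only [map_mul, map_zpow, map_inv, FreeGroup.lift_apply_of, e0, e1, e2]
    rw [show (bb ^ u)⁻¹ * (aa ^ (2 * t))⁻¹ * cc * aa ^ (2 * t) * bb ^ u *
        ((bb ^ u)⁻¹ * (aa ^ (2 * t))⁻¹ * cc)⁻¹ * aa ^ (2 * t) * bb ^ u =
        (bb ^ u)⁻¹ * (aa ^ (2 * t))⁻¹ * (cc * (aa ^ (2 * t) * bb ^ u) * cc⁻¹) *
          (aa ^ (2 * t) * bb ^ u) * (aa ^ (2 * t) * bb ^ u) from by group,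
      hconj]
    group

end Aux

theorem stmt10 (r s t u : ℤ) (h : r * u - s * t = 1) (hs : Even s) :
    ∃ θ : SapphireGroup r s t u ≃* SapphireGroup r s t u,
      θ (PresentedGroup.of 0) = PresentedGroup.of 0 ∧
      θ (PresentedGroup.of 1) = PresentedGroup.of 1 ∧
      (∃ m n : ℤ, Odd n ∧
        θ (PresentedGroup.of 2) =
          ((PresentedGroup.of 0 : SapphireGroup r s t u) ^ 2) ^ m *
            (PresentedGroup.of 1 : SapphireGroup r s t u) ^ n * PresentedGroup.of 2) ∧
      ∀ φ₂ φ₆ : SapphireGroup r s t u →* Multiplicative (ZMod 2),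
        (φ₂ (PresentedGroup.of 0) = Multiplicative.ofAdd (0 : ZMod 2) ∧
         φ₂ (PresentedGroup.of 1) = Multiplicative.ofAdd (1 : ZMod 2) ∧
         φ₂ (PresentedGroup.of 2) = Multiplicative.ofAdd (0 : ZMod 2)) →
        (φ₆ (PresentedGroup.of 0) = Multiplicative.ofAdd (0 : ZMod 2) ∧
         φ₆ (PresentedGroup.of 1) = Multiplicative.ofAdd (1 : ZMod 2) ∧
         φ₆ (PresentedGroup.of 2) = Multiplicative.ofAdd (1 : ZMod 2)) →
        φ₆.comp θ.toMonoidHom = φ₂ := by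
  have hu : Odd u := by
    have hru : Odd (r * u) := by
      rw [show r * u = s * t + 1 by omega]
      exact (hs.mul_right t).add_one
    exact (Int.odd_mul.mp hru).2
  set Φ : SapphireGroup r s t u →* SapphireGroup r s t u :=
    PresentedGroup.toGroup (sapphireF_rels r s t u) with hΦ
  set Ψ : SapphireGroup r s t u →* SapphireGroup r s t u :=
    PresentedGroup.toGroup (sapphireFinv_rels r s t u) with hΨ
  have hΦ0 : Φ (PresentedGroup.of 0) = PresentedGroup.of 0 := by
    rw [hΦ, PresentedGroup.toGroup.of]; rfl
  have hΦ1 : Φ (PresentedGroup.of 1) = PresentedGroup.of 1 := by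
    rw [hΦ, PresentedGroup.toGroup.of]; rfl
  have hΦ2 : Φ (PresentedGroup.of 2) =
      (PresentedGroup.of 0 : SapphireGroup r s t u) ^ (2 * t) *
        (PresentedGroup.of 1 : SapphireGroup r s t u) ^ u * PresentedGroup.of 2 := by
    rw [hΦ, PresentedGroup.toGroup.of]; rfl
  have hΨ0 : Ψ (PresentedGroup.of 0) = PresentedGroup.of 0 := by
    rw [hΨ, PresentedGroup.toGroup.of]; rfl
  have hΨ1 : Ψ (PresentedGroup.of 1) = PresentedGroup.of 1 := by
    rw [hΨ, PresentedGroup.toGroup.of]; rfl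
  have hΨ2 : Ψ (PresentedGroup.of 2) =
      ((PresentedGroup.of 1 : SapphireGroup r s t u) ^ u)⁻¹ *
        ((PresentedGroup.of 0 : SapphireGroup r s t u) ^ (2 * t))⁻¹ * PresentedGroup.of 2 := by
    rw [hΨ, PresentedGroup.toGroup.of]; rfl
  have hΨΦ : Ψ.comp Φ = MonoidHom.id _ := by
    ext i
    fin_cases i
    · show Ψ (Φ (PresentedGroup.of 0)) = PresentedGroup.of 0
      rw [hΦ0, hΨ0]
    · show Ψ (Φ (PresentedGroup.of 1)) = PresentedGroup.of 1
      rw [hΦ1, hΨ1]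
    · show Ψ (Φ (PresentedGroup.of 2)) = PresentedGroup.of 2
      rw [hΦ2, map_mul, map_mul, map_zpow, map_zpow, hΨ0, hΨ1, hΨ2]
      group
  have hΦΨ : Φ.comp Ψ = MonoidHom.id _ := by
    ext i
    fin_cases i
    · show Φ (Ψ (PresentedGroup.of 0)) = PresentedGroup.of 0
      rw [hΨ0, hΦ0]
    · show Φ (Ψ (PresentedGroup.of 1)) = PresentedGroup.of 1
      rw [hΨ1, hΦ1]
    · show Φ (Ψ (PresentedGroup.of 2)) = PresentedGroup.of 2
      rw [hΨ2, map_mul, map_mul, map_inv, map_inv, map_zpow, map_zpow, hΦ0, hΦ1, hΦ2]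
      group
  refine ⟨Φ.toMulEquiv Ψ hΨΦ hΦΨ, hΦ0, hΦ1, ⟨t, u, hu, ?_⟩, ?_⟩
  · rw [show (Φ.toMulEquiv Ψ hΨΦ hΦΨ) (PresentedGroup.of 2) = Φ (PresentedGroup.of 2) from rfl,
      hΦ2]
    congr 2
    rw [← zpow_natCast (PresentedGroup.of 0 : SapphireGroup r s t u) 2, ← zpow_mul]
    norm_num
  · rintro φ₂ φ₆ ⟨h20, h21, h22⟩ ⟨h60, h61, h62⟩
    ext i
    fin_cases i
    · show φ₆ ((Φ.toMulEquiv Ψ hΨΦ hΦΨ) (PresentedGroup.of 0)) = φ₂ (PresentedGroup.of 0)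
      rw [show (Φ.toMulEquiv Ψ hΨΦ hΦΨ) (PresentedGroup.of 0) = Φ (PresentedGroup.of 0) from rfl,
        hΦ0, h60, h20]
    · show φ₆ ((Φ.toMulEquiv Ψ hΨΦ hΦΨ) (PresentedGroup.of 1)) = φ₂ (PresentedGroup.of 1)
      rw [show (Φ.toMulEquiv Ψ hΨΦ hΦΨ) (PresentedGroup.of 1) = Φ (PresentedGroup.of 1) from rfl,
        hΦ1, h61, h21]
    · show φ₆ ((Φ.toMulEquiv Ψ hΨΦ hΦΨ) (PresentedGroup.of 2)) = φ₂ (PresentedGroup.of 2)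
      rw [show (Φ.toMulEquiv Ψ hΨΦ hΦΨ) (PresentedGroup.of 2) = Φ (PresentedGroup.of 2) from rfl,
        hΦ2, map_mul, map_mul, map_zpow, map_zpow, h60, h61, h62, h22]
      obtain ⟨k, hk⟩ := hu
      subst hk
      have h1 : (Multiplicative.ofAdd (0 : ZMod 2)) ^ (2 * t) = 1 := by
        simp
      have h2 : (Multiplicative.ofAdd (1 : ZMod 2)) ^ (2 * k + 1) =
          Multiplicative.ofAdd (1 : ZMod 2) := by
        rw [← ofAdd_zsmul]
        congr 1
        rw [Int.smul_one_eq_cast]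
        push_cast
        rw [show ((2 : ZMod 2)) = 0 by decide]
        ring
      rw [h1, h2, one_mul]
      decide
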